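/- For every integer n ≥ 2, the conflict-free connection number of the path P_n on n vertices equals ⌈log₂ n⌉. -/

import Mathlib

open SimpleGraph

/-- An edge-coloring `c` with `k` colors makes `G` conflict-free connected if every two
distinct vertices are joined by a path on which some color appears on exactly one edge. -/
def SimpleGraph.IsCFCColoring {V : Type*} (G : SimpleGraph V) {k : ℕ}
    (c : Sym2 V → Fin k) : Prop :=
  ∀ u v : V, u ≠ v → ∃ p : G.Walk u v, p.IsPath ∧
    ∃ col : Fin k, (p.edges.map c).count col = 1

/-- The conflict-free connection number of `G`: the smallest number of colors in an
edge-coloring of `G` that makes `G` conflict-free connected. -/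
noncomputable def SimpleGraph.cfc {V : Type*} (G : SimpleGraph V) : ℕ :=
  sInf {k | ∃ c : Sym2 V → Fin k, G.IsCFCColoring c}

section Helpers

lemma countP_one_iff {α : Type*} {l : List α} {p : α → Bool} (hn : l.Nodup) :
    l.countP p = 1 ↔ ∃ i ∈ l, p i ∧ ∀ j ∈ l, p j → j = i := by
  induction l with
  | nil => simp
  | cons a t ih =>
    rw [List.nodup_cons] at hn
    rw [List.countP_cons]
    by_cases hpa : p a
    · simp only [hpa, if_true]
      constructor
      · intro h
        have ht : t.countP p = 0 := by omega
        rw [List.countP_eq_zero] at ht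
        exact ⟨a, by simp, hpa, by
          intro j hj hpj
          rcases List.mem_cons.1 hj with rfl | hj
          · rfl
          · exact absurd hpj (by simpa using ht j hj)⟩
      · rintro ⟨i, hi, hpi, hu⟩
        have : t.countP p = 0 := by
          rw [List.countP_eq_zero]
          intro j hj hpj
          have := hu j (List.mem_cons_of_mem _ hj) hpj
          have ha := hu a List.mem_cons_self hpa
          subst this; subst ha
          exact absurd hj hn.1
        omega
    · simp only [hpa, Bool.false_eq_true, if_false, Nat.add_zero]
      rw [ih hn.2]
      constructor
      · rintro ⟨i, hi, hpi, hu⟩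
        exact ⟨i, List.mem_cons_of_mem _ hi, hpi, by
          intro j hj hpj
          rcases List.mem_cons.1 hj with rfl | hj
          · simp [hpj] at hpa
          · exact hu j hj hpj⟩
      · rintro ⟨i, hi, hpi, hu⟩
        rcases List.mem_cons.1 hi with rfl | hi
        · simp [hpi] at hpa
        · exact ⟨i, hi, hpi, fun j hj hpj => hu j (List.mem_cons_of_mem _ hj) hpj⟩

lemma key_lemma {α : Type*} [DecidableEq α] :
    ∀ (k : ℕ) (S : Finset α) (_ : S.card ≤ k) (m : ℕ) (f : ℕ → α)
      (_ : ∀ j < m, f j ∈ S)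
      (_ : ∀ a b, a ≤ b → b < m →
        ∃ i, a ≤ i ∧ i ≤ b ∧ ∀ j, a ≤ j → j ≤ b → f j = f i → j = i),
      m < 2 ^ k := by
  intro k
  induction k with
  | zero =>
    intro S hS m f hmem _
    rcases Nat.eq_zero_or_pos m with rfl | hm
    · simp
    · have h0 := hmem 0 hm
      have : S = ∅ := Finset.card_eq_zero.1 (Nat.le_zero.1 hS)
      simp [this] at h0
  | succ k ih =>
    intro S hS m f hmem hint
    rcases Nat.eq_zero_or_pos m with rfl | hm
    · positivity
    · obtain ⟨p, -, hpm, hu⟩ := hint 0 (m - 1) (Nat.zero_le _) (by omega)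
      have hpmem : f p ∈ S := hmem p (by omega)
      have hcard : (S.erase (f p)).card ≤ k := by
        rw [Finset.card_erase_of_mem hpmem]; omega
      have hleft : p < 2 ^ k := by
        refine ih (S.erase (f p)) hcard p f (fun j hj => ?_) (fun a b hab hb => ?_)
        · refine Finset.mem_erase.2 ⟨fun h => ?_, hmem j (by omega)⟩
          have := hu j (Nat.zero_le _) (by omega) h
          omega
        · exact hint a b hab (by omega)
      have hright : m - 1 - p < 2 ^ k := by
        refine ih (S.erase (f p)) hcard (m - 1 - p) (fun j => f (p + 1 + j))
          (fun j hj => ?_) (fun a b hab hb => ?_)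
        · refine Finset.mem_erase.2 ⟨fun h => ?_, hmem _ (by omega)⟩
          have := hu (p + 1 + j) (Nat.zero_le _) (by omega) h
          omega
        · obtain ⟨i, hi1, hi2, hiu⟩ := hint (p + 1 + a) (p + 1 + b) (by omega) (by omega)
          refine ⟨i - (p + 1), by omega, by omega, fun j hj1 hj2 hfj => ?_⟩
          have : p + 1 + j = i := by
            apply hiu (p + 1 + j) (by omega) (by omega)
            rw [hfj]; congr 1; omega
          omega
      have h2 : 2 ^ (k + 1) = 2 ^ k + 2 ^ k := by rw [pow_succ]; omega
      omega

lemma val_le_log {q : ℕ} (hq : q ≠ 0) : (Nat.factorization q) 2 ≤ Nat.log 2 q := by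
  rw [Nat.le_log_iff_pow_le one_lt_two hq]
  exact Nat.le_of_dvd (Nat.pos_of_ne_zero hq) (Nat.ordProj_dvd q 2)

lemma unique_max_val {l r : ℕ} (hl : 1 ≤ l) (hlr : l ≤ r) :
    ∃ q, l ≤ q ∧ q ≤ r ∧ ∀ q', l ≤ q' → q' ≤ r →
      (Nat.factorization q') 2 = (Nat.factorization q) 2 → q' = q := by
  classical
  set T := Finset.Icc l r with hT
  have hne : T.Nonempty := ⟨l, by simp [hT]; omega⟩
  obtain ⟨q, hqT, hq⟩ := Finset.exists_mem_eq_sup T hne (fun q => (Nat.factorization q) 2)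
  rw [Finset.mem_Icc] at hqT
  have hmax : ∀ x, l ≤ x → x ≤ r → (Nat.factorization x) 2 ≤ (Nat.factorization q) 2 := by
    intro x h1 h2
    rw [← hq]
    exact Finset.le_sup (f := fun q => (Nat.factorization q) 2) (Finset.mem_Icc.2 ⟨h1, h2⟩)
  have htwo : ∀ q1 q2, l ≤ q1 → q2 ≤ r → q1 < q2 →
      (Nat.factorization q1) 2 = (Nat.factorization q) 2 →
      (Nat.factorization q2) 2 = (Nat.factorization q) 2 → False := by
    intro q1 q2 h1 h2 hlt he1 he2
    set v := (Nat.factorization q) 2 with hv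
    have hq1ne : q1 ≠ 0 := by omega
    have hq2ne : q2 ≠ 0 := by omega
    have hd1 : 2 ^ v ∣ q1 := he1 ▸ Nat.ordProj_dvd q1 2
    have hd2 : 2 ^ v ∣ q2 := he2 ▸ Nat.ordProj_dvd q2 2
    have hnd1 : ¬ 2 ^ (v + 1) ∣ q1 := by
      rw [Nat.Prime.pow_dvd_iff_le_factorization Nat.prime_two hq1ne]
      omega
    obtain ⟨m1, hm1⟩ := hd1
    obtain ⟨m2, hm2⟩ := hd2
    have hm1odd : ¬ 2 ∣ m1 := by
      rintro ⟨t, rfl⟩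
      exact hnd1 ⟨t, by rw [hm1]; ring⟩
    obtain ⟨t, ht⟩ : 2 ∣ m1 + 1 := by omega
    have hpow : 0 < 2 ^ v := Nat.pow_pos (by norm_num)
    have hm12 : m1 < m2 := by
      by_contra h
      push_neg at h
      have : q2 ≤ q1 := by rw [hm1, hm2]; exact Nat.mul_le_mul_left _ h
      omega
    set q' := 2 ^ v * (m1 + 1) with hq'
    have hq'ne : q' ≠ 0 := by positivity
    have hdq' : 2 ^ (v + 1) ∣ q' := ⟨t, by rw [hq', ht]; ring⟩
    have hvq' : v + 1 ≤ (Nat.factorization q') 2 :=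
      (Nat.Prime.pow_dvd_iff_le_factorization Nat.prime_two hq'ne).1 hdq'
    have hq'le : q' ≤ q2 := by
      rw [hq', hm2]
      exact Nat.mul_le_mul_left _ (by omega)
    have hq'ge : l ≤ q' := by
      calc l ≤ q1 := h1
      _ ≤ q' := by rw [hm1, hq']; exact Nat.mul_le_mul_left _ (by omega)
    have := hmax q' hq'ge (le_trans hq'le h2)
    omega
  refine ⟨q, hqT.1, hqT.2, fun q' h1 h2 he => ?_⟩
  rcases lt_trichotomy q' q with h | h | h
  · exact absurd (htwo q' q h1 hqT.2 h he rfl) (by simp)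
  · exact h
  · exact absurd (htwo q q' hqT.1 h2 h rfl he) (by simp)

end Helpers

section PathStruct

def emin {n : ℕ} : Sym2 (Fin n) → ℕ :=
  Sym2.lift ⟨fun a b => min a.val b.val, fun _ _ => min_comm _ _⟩

@[simp] lemma emin_mk {n : ℕ} (a b : Fin n) : emin s(a, b) = min a.val b.val := rfl

lemma mem_of_val_mem_map {n : ℕ} {x : Fin n} {l : List (Fin n)}
    (h : x.val ∈ l.map Fin.val) : x ∈ l := by
  obtain ⟨y, hy, hval⟩ := List.mem_map.1 h
  exact (Fin.ext hval : y = x) ▸ hy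

lemma rev_range'_succ (s m : ℕ) :
    (List.range' s (m + 1)).reverse = (s + m) :: (List.range' s m).reverse := by
  rw [List.range'_1_concat, List.reverse_append]
  simp

lemma path_struct {n : ℕ} {u v : Fin n} (p : (pathGraph n).Walk u v) (hp : p.IsPath) :
    (u.val + p.length = v.val ∧
      p.support.map Fin.val = List.range' u.val (p.length + 1) ∧
      p.edges.map emin = List.range' u.val p.length)
    ∨ (v.val + p.length = u.val ∧
      p.support.map Fin.val = (List.range' v.val (p.length + 1)).reverse ∧
      p.edges.map emin = (List.range' v.val p.length).reverse) := by
  induction p with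
  | nil => left; simp
  | @cons u w v h q ih =>
    rw [Walk.cons_isPath_iff] at hp
    obtain ⟨hq, hu⟩ := hp
    have hadj := pathGraph_adj.1 h
    rcases ih hq with ⟨hlen, hsupp, hedge⟩ | ⟨hlen, hsupp, hedge⟩
    · rcases hadj with h1 | h1
      · left
        refine ⟨by simp [Walk.length_cons]; omega, ?_, ?_⟩
        · rw [Walk.support_cons, List.map_cons, hsupp, Walk.length_cons]
          conv_rhs => rw [List.range'_succ, List.range'_succ]
          rw [h1, List.range'_succ]
        · rw [Walk.edges_cons, List.map_cons, hedge, Walk.length_cons, emin_mk]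
          conv_rhs => rw [List.range'_succ]
          rw [← h1]
          congr 1
          omega
      · have hlq : q.length = 0 := by
          by_contra hne
          apply hu
          apply mem_of_val_mem_map
          rw [hsupp, List.mem_range'_1]
          omega
        right
        have hvw : v.val = w.val := by omega
        refine ⟨by simp [Walk.length_cons]; omega, ?_, ?_⟩
        · rw [Walk.support_cons, List.map_cons, hsupp, hlq, Walk.length_cons, hlq]
          have h2 : (u : ℕ) = (v : ℕ) + 1 := by omega
          simp [rev_range'_succ, List.range'_succ, h2, hvw]
        · rw [Walk.edges_cons, List.map_cons, hedge, hlq, Walk.length_cons, hlq, emin_mk]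
          have h2 : (u : ℕ) = (v : ℕ) + 1 := by omega
          simp [List.range'_succ, h2, hvw]
    · rcases hadj with h1 | h1
      · have hlq : q.length = 0 := by
          by_contra hne
          apply hu
          apply mem_of_val_mem_map
          rw [hsupp, List.mem_reverse, List.mem_range'_1]
          omega
        left
        have hvw : v.val = w.val := by omega
        refine ⟨by simp [Walk.length_cons]; omega, ?_, ?_⟩
        · rw [Walk.support_cons, List.map_cons, hsupp, hlq, Walk.length_cons, hlq]
          have h2 : (v : ℕ) = (u : ℕ) + 1 := by omega
          simp [List.range'_succ, h2, hvw]
        · rw [Walk.edges_cons, List.map_cons, hedge, hlq, Walk.length_cons, hlq, emin_mk]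
          have h2 : (v : ℕ) = (u : ℕ) + 1 := by omega
          simp [List.range'_succ, h2, hvw, Nat.min_def]
          omega
      · right
        refine ⟨by simp [Walk.length_cons]; omega, ?_, ?_⟩
        · rw [Walk.support_cons, List.map_cons, hsupp, Walk.length_cons]
          conv_rhs => rw [rev_range'_succ]
          congr 1
          omega
        · rw [Walk.edges_cons, List.map_cons, hedge, Walk.length_cons, emin_mk]
          conv_rhs => rw [rev_range'_succ]
          congr 1
          omega

def edgeOf (n : ℕ) [NeZero n] (i : ℕ) : Sym2 (Fin n) :=
  s(⟨i % n, Nat.mod_lt _ (NeZero.pos n)⟩, ⟨(i + 1) % n, Nat.mod_lt _ (NeZero.pos n)⟩)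

lemma edgeOf_eq {n : ℕ} [NeZero n] {i : ℕ} (h : i + 1 < n) (x y : Fin n)
    (hx : x.val = i) (hy : y.val = i + 1) : edgeOf n i = s(x, y) := by
  rw [edgeOf]
  have e1 : i % n = x.val := by rw [Nat.mod_eq_of_lt (by omega)]; omega
  have e2 : (i + 1) % n = y.val := by rw [Nat.mod_eq_of_lt h]; omega
  congr 1
  exacts [Fin.ext e1, Fin.ext e2]

lemma emin_edgeOf {n : ℕ} [NeZero n] {i : ℕ} (h : i + 1 < n) : emin (edgeOf n i) = i := by
  rw [edgeOf, emin_mk]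
  show min (i % n) ((i + 1) % n) = i
  rw [Nat.mod_eq_of_lt (by omega), Nat.mod_eq_of_lt h]
  omega

lemma edge_eq_edgeOf {n : ℕ} [NeZero n] {e : Sym2 (Fin n)} (he : e ∈ (pathGraph n).edgeSet) :
    e = edgeOf n (emin e) := by
  induction e with
  | _ x y =>
    rw [SimpleGraph.mem_edgeSet, pathGraph_adj] at he
    rcases he with h | h
    · have h1 : emin s(x, y) = x.val := by
        rw [show emin s(x,y) = min x.val y.val from rfl]; omega
      rw [h1, edgeOf_eq (by omega) x y rfl (by omega)]
    · have h1 : emin s(x, y) = y.val := by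
        rw [show emin s(x,y) = min x.val y.val from rfl]; omega
      rw [h1, edgeOf_eq (by omega) y x rfl (by omega), Sym2.eq_swap]

def cwalk (n : ℕ) : (d a : ℕ) → (h : a + d < n) → (pathGraph n).Walk ⟨a, by omega⟩ ⟨a + d, h⟩
  | 0, a, h => Walk.nil
  | d + 1, a, h =>
    Walk.cons
      (show (pathGraph n).Adj ⟨a, by omega⟩ ⟨a + 1, by omega⟩ by rw [pathGraph_adj]; left; rfl)
      ((cwalk n d (a + 1) (by omega)).copy rfl (Fin.ext (by simp; omega)))

lemma cwalk_support (n : ℕ) : ∀ (d a : ℕ) (h : a + d < n),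
    (cwalk n d a h).support.map Fin.val = List.range' a (d + 1)
  | 0, a, h => by simp [cwalk]
  | d + 1, a, h => by
    rw [cwalk, Walk.support_cons, List.map_cons, Walk.support_copy, cwalk_support n d (a+1)]
    conv_rhs => rw [List.range'_succ]

lemma cwalk_edges (n : ℕ) [NeZero n] : ∀ (d a : ℕ) (h : a + d < n),
    (cwalk n d a h).edges = (List.range' a d).map (edgeOf n)
  | 0, a, h => by simp [cwalk]
  | d + 1, a, h => by
    rw [cwalk, Walk.edges_cons, Walk.edges_copy, cwalk_edges n d (a+1), List.range'_succ,
      List.map_cons]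
    congr 1
    exact (edgeOf_eq (i := a) (by omega) _ _ rfl rfl).symm

lemma cwalk_isPath (n : ℕ) (d a : ℕ) (h : a + d < n) : (cwalk n d a h).IsPath := by
  rw [Walk.isPath_def]
  have hnd : ((cwalk n d a h).support.map Fin.val).Nodup := by
    rw [cwalk_support n d a h]; exact List.nodup_range'
  exact hnd.of_map _

end PathStruct

section Bounds

lemma upper_bound (n : ℕ) (hn : 2 ≤ n) :
    ∃ c : Sym2 (Fin n) → Fin (Nat.clog 2 n), (pathGraph n).IsCFCColoring c := by
  haveI : NeZero n := ⟨by omega⟩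
  set k := Nat.clog 2 n with hkdef
  have hk : 0 < k := by
    rw [hkdef, Nat.lt_clog_iff_pow_lt one_lt_two]
    simpa using (show 1 < n by omega)
  have hlogk : Nat.log 2 (n - 1) < k := by
    rw [hkdef, Nat.lt_clog_iff_pow_lt one_lt_two]
    calc 2 ^ Nat.log 2 (n - 1) ≤ n - 1 := Nat.pow_log_le_self 2 (by omega)
    _ < n := by omega
  have hbound : ∀ q : ℕ, q ≠ 0 → q ≤ n - 1 → (Nat.factorization q) 2 ≤ k - 1 := by
    intro q hq0 hqn
    have h1 := val_le_log hq0
    have h2 := Nat.log_mono_right (b := 2) hqn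
    omega
  set c : Sym2 (Fin n) → Fin k :=
    fun e => ⟨min ((Nat.factorization (emin e + 1)) 2) (k - 1), by omega⟩ with hc
  refine ⟨c, ?_⟩
  have main : ∀ u v : Fin n, u.val < v.val → ∃ p : (pathGraph n).Walk u v, p.IsPath ∧
      ∃ col : Fin k, (p.edges.map c).count col = 1 := by
    intro u v huv
    have hvn : v.val < n := v.isLt
    have h : u.val + (v.val - u.val) < n := by omega
    refine ⟨(cwalk n (v.val - u.val) u.val h).copy (Fin.ext rfl) (Fin.ext (by simp; omega)),
      by rw [Walk.isPath_copy]; exact cwalk_isPath n _ _ h, ?_⟩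
    obtain ⟨q, hq1, hq2, hq⟩ := unique_max_val (l := u.val + 1) (r := v.val)
      (by omega) (by omega)
    refine ⟨c (edgeOf n (q - 1)), ?_⟩
    rw [Walk.edges_copy, cwalk_edges, List.map_map, List.count_eq_countP, List.countP_map,
      countP_one_iff List.nodup_range']
    have hval : ∀ j, u.val ≤ j → j < u.val + (v.val - u.val) →
        (c (edgeOf n j)).val = min ((Nat.factorization (j + 1)) 2) (k - 1) := by
      intro j hj1 hj2
      rw [hc]
      simp only
      rw [emin_edgeOf (by omega)]
    refine ⟨q - 1, List.mem_range'_1.2 ⟨by omega, by omega⟩, by simp, ?_⟩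
    intro j hj hpj
    rw [List.mem_range'_1] at hj
    simp only [Function.comp_apply, beq_iff_eq] at hpj
    have hj' : (c (edgeOf n j)).val = (c (edgeOf n (q - 1))).val := by rw [hpj]
    rw [hval j hj.1 hj.2, hval (q - 1) (by omega) (by omega)] at hj'
    rw [show q - 1 + 1 = q by omega] at hj'
    have hb1 : (Nat.factorization (j + 1)) 2 ≤ k - 1 := hbound _ (by omega) (by omega)
    have hb2 : (Nat.factorization q) 2 ≤ k - 1 := hbound _ (by omega) (by omega)
    have heq : (Nat.factorization (j + 1)) 2 = (Nat.factorization q) 2 := by omega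
    have := hq (j + 1) (by omega) (by omega) heq
    omega
  intro u v hne
  rcases lt_or_gt_of_ne (fun h : u.val = v.val => hne (Fin.ext h)) with h | h
  · exact main u v h
  · obtain ⟨p, hp, col, hcount⟩ := main v u h
    refine ⟨p.reverse, hp.reverse, col, ?_⟩
    rw [Walk.edges_reverse, List.map_reverse, List.count_reverse]
    exact hcount

lemma lower_bound (n k : ℕ) (hn : 2 ≤ n) (c : Sym2 (Fin n) → Fin k)
    (hc : (pathGraph n).IsCFCColoring c) : Nat.clog 2 n ≤ k := by
  haveI : NeZero n := ⟨by omega⟩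
  rw [Nat.clog_le_iff_le_pow one_lt_two]
  suffices h : n - 1 < 2 ^ k by omega
  refine key_lemma k Finset.univ (by simp) (n - 1) (fun i => c (edgeOf n i))
    (fun j _ => Finset.mem_univ _) ?_
  intro a b hab hb
  have hne : (⟨a, by omega⟩ : Fin n) ≠ ⟨b + 1, by omega⟩ := by
    intro hcon
    have := congrArg Fin.val hcon
    simp at this
    omega
  obtain ⟨p, hp, col, hcount⟩ := hc _ _ hne
  rcases path_struct p hp with ⟨hlen, -, hedge⟩ | ⟨hlen, -, -⟩
  swap
  · exfalso
    simp only [Fin.val_mk] at hlen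
    omega
  · simp only [Fin.val_mk] at hlen hedge
    have hd : p.length = b + 1 - a := by omega
    have hedges2 : p.edges = (List.range' a (b + 1 - a)).map (edgeOf n) := by
      calc p.edges = p.edges.map id := (List.map_id _).symm
      _ = p.edges.map (fun e => edgeOf n (emin e)) :=
        List.map_congr_left (fun e he => edge_eq_edgeOf (p.edges_subset_edgeSet he))
      _ = (p.edges.map emin).map (edgeOf n) := by rw [List.map_map]; rfl
      _ = (List.range' a (b + 1 - a)).map (edgeOf n) := by rw [hedge, hd]
    rw [hedges2, List.map_map, List.count_eq_countP, List.countP_map,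
      countP_one_iff List.nodup_range'] at hcount
    obtain ⟨i, hi, hpi, hu⟩ := hcount
    rw [List.mem_range'_1] at hi
    simp only [Function.comp_apply, beq_iff_eq] at hpi
    refine ⟨i, by omega, by omega, fun j hj1 hj2 hfj => ?_⟩
    apply hu j (List.mem_range'_1.2 ⟨by omega, by omega⟩)
    simp only [Function.comp_apply, beq_iff_eq]
    rw [hfj, hpi]

end Bounds

/-- For `n ≥ 2`, the conflict-free connection number of the path on `n` vertices
equals `⌈log₂ n⌉`. -/
theorem stmt_2 (n : ℕ) (hn : 2 ≤ n) : (pathGraph n).cfc = Nat.clog 2 n := by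
  rw [SimpleGraph.cfc]
  apply le_antisymm
  · exact Nat.sInf_le (upper_bound n hn)
  · refine le_csInf ⟨Nat.clog 2 n, upper_bound n hn⟩ ?_
    rintro k ⟨c, hc⟩
    exact lower_bound n k hn c hc
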